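/- Let G be a bisplit graph with partition (X,Y,Z), where X, Y, Z are independent sets and Y ∪ Z induces a complete bipartite graph. Let G* be obtained from G by adding four new vertices x, y, z, x' forming a path x–y–z–x', where additionally y is adjacent to every vertex of X ∪ Z and z is adjacent to every vertex of Y. Then for every positive integer k: G has a dominating set of cardinality at most k if and only if G* has a secure dominating set of cardinality at most k+2. -/

import Mathlib

/-- `D` is a dominating set of `G`: every vertex outside `D` has a neighbour in `D`. -/
def Dominates {V : Type*} (G : SimpleGraph V) (D : Set V) : Prop :=
  ∀ u, u ∉ D → ∃ v ∈ D, G.Adj u v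

/-- `S` is a secure dominating set of `G`. -/
def SecureDominates {V : Type*} (G : SimpleGraph V) (S : Set V) : Prop :=
  Dominates G S ∧
    ∀ u, u ∉ S → ∃ v ∈ S, G.Adj u v ∧ Dominates G ((S \ {v}) ∪ {u})

/-- The graph `G*` obtained from a bisplit graph `G` (with parts `X`, `Y`, `Z`) by adding four
new vertices `x = Sum.inr 0`, `y = Sum.inr 1`, `z = Sum.inr 2`, `x' = Sum.inr 3` forming a path
`x - y - z - x'`, where additionally `y` is adjacent to every vertex of `X ∪ Z` and
`z` is adjacent to every vertex of `Y`. -/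
def bisplitExt {V : Type*} (G : SimpleGraph V) (X Y Z : Set V) : SimpleGraph (V ⊕ Fin 4) :=
  SimpleGraph.fromRel (fun a b =>
    (∃ u v, a = Sum.inl u ∧ b = Sum.inl v ∧ G.Adj u v) ∨
    (a = Sum.inr 0 ∧ b = Sum.inr 1) ∨
    (a = Sum.inr 1 ∧ b = Sum.inr 2) ∨
    (a = Sum.inr 2 ∧ b = Sum.inr 3) ∨
    (∃ u, a = Sum.inr 1 ∧ b = Sum.inl u ∧ u ∈ X ∪ Z) ∨
    (∃ u, a = Sum.inr 2 ∧ b = Sum.inl u ∧ u ∈ Y))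

section Helpers

variable {V : Type*} {G : SimpleGraph V} {X Y Z : Set V}

lemma be_inl_inl (u v : V) :
    (bisplitExt G X Y Z).Adj (Sum.inl u) (Sum.inl v) ↔ G.Adj u v := by
  simp [bisplitExt, SimpleGraph.fromRel_adj]
  constructor
  · rintro ⟨h, h1 | h2⟩
    · exact h1
    · exact h2.symm
  · intro h; exact ⟨fun he => G.irrefl (he ▸ h), Or.inl h⟩

lemma be_inl_inr (u : V) (i : Fin 4) :
    (bisplitExt G X Y Z).Adj (Sum.inl u) (Sum.inr i) ↔ (i = 1 ∧ u ∈ X ∪ Z) ∨ (i = 2 ∧ u ∈ Y) := by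
  simp [bisplitExt, SimpleGraph.fromRel_adj]

lemma be_inr_inl (i : Fin 4) (u : V) :
    (bisplitExt G X Y Z).Adj (Sum.inr i) (Sum.inl u) ↔ (i = 1 ∧ u ∈ X ∪ Z) ∨ (i = 2 ∧ u ∈ Y) := by
  rw [SimpleGraph.adj_comm]; exact be_inl_inr u i

lemma be_inr_inr (i j : Fin 4) :
    (bisplitExt G X Y Z).Adj (Sum.inr i) (Sum.inr j) ↔
      (i = 0 ∧ j = 1) ∨ (i = 1 ∧ j = 0) ∨ (i = 1 ∧ j = 2) ∨ (i = 2 ∧ j = 1) ∨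
      (i = 2 ∧ j = 3) ∨ (i = 3 ∧ j = 2) := by
  simp [bisplitExt, SimpleGraph.fromRel_adj]
  constructor
  · rintro ⟨hne, h⟩
    rcases h with (⟨a,b,c⟩|⟨a,b⟩|⟨a,b⟩)|(⟨a,b⟩|⟨a,b⟩|⟨a,b⟩) <;> tauto
  · rintro (⟨a,b⟩|⟨a,b⟩|⟨a,b⟩|⟨a,b⟩|⟨a,b⟩|⟨a,b⟩) <;> subst a <;> subst b <;>
      exact ⟨by decide, by tauto⟩

lemma pair_le_ncard {α : Type*} [Finite α] {A : Set α} (a b : α)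
    (ha : a ∈ A) (hb : b ∈ A) (hab : a ≠ b) : 2 ≤ A.ncard := by
  have hsub : ({a, b} : Set α) ⊆ A := by
    rintro x (rfl | rfl) <;> assumption
  calc 2 = ({a, b} : Set α).ncard := (Set.ncard_pair hab).symm
    _ ≤ A.ncard := Set.ncard_le_ncard hsub A.toFinite

lemma triple_le_ncard {α : Type*} [Finite α] {A : Set α} (a b c : α)
    (ha : a ∈ A) (hb : b ∈ A) (hc : c ∈ A)
    (hab : a ≠ b) (hac : a ≠ c) (hbc : b ≠ c) : 3 ≤ A.ncard := by
  have hsub : ({a, b, c} : Set α) ⊆ A := by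
    rintro x (rfl | rfl | rfl) <;> assumption
  have h3 : ({a, b, c} : Set α).ncard = 3 := by
    rw [Set.ncard_insert_of_notMem (by simp [hab, hac]), Set.ncard_pair hbc]
  calc 3 = ({a, b, c} : Set α).ncard := h3.symm
    _ ≤ A.ncard := Set.ncard_le_ncard hsub A.toFinite

end Helpers

theorem bisplitExt_domination_iff_secureDomination {V : Type*} [Fintype V]
    (G : SimpleGraph V) (X Y Z : Set V)
    (hpart : X ∪ Y ∪ Z = Set.univ)
    (hXY : Disjoint X Y) (hXZ : Disjoint X Z) (hYZ : Disjoint Y Z)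
    (hX : ∀ a ∈ X, ∀ b ∈ X, ¬ G.Adj a b)
    (hY : ∀ a ∈ Y, ∀ b ∈ Y, ¬ G.Adj a b)
    (hZ : ∀ a ∈ Z, ∀ b ∈ Z, ¬ G.Adj a b)
    (hbic : ∀ a ∈ Y, ∀ b ∈ Z, G.Adj a b)
    (k : ℕ) (hk : 0 < k) :
    (∃ D : Set V, Dominates G D ∧ D.ncard ≤ k) ↔
      (∃ S : Set (V ⊕ Fin 4), SecureDominates (bisplitExt G X Y Z) S ∧ S.ncard ≤ k + 2) := by
  classical
  constructor
  · -- forward direction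
    rintro ⟨D, hD, hDc⟩
    refine ⟨Sum.inl '' D ∪ {Sum.inr 1, Sum.inr 2}, ⟨?_, ?_⟩, ?_⟩
    · -- domination
      intro a ha
      rcases a with w | i
      · have hw : w ∉ D := fun h => ha (Or.inl ⟨w, h, rfl⟩)
        obtain ⟨v, hv, hadj⟩ := hD w hw
        exact ⟨Sum.inl v, Or.inl ⟨v, hv, rfl⟩, (be_inl_inl w v).2 hadj⟩
      · fin_cases i
        · exact ⟨Sum.inr 1, Or.inr (by simp), (be_inr_inr 0 1).2 (by simp)⟩
        · exact absurd (Or.inr (by simp)) ha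
        · exact absurd (Or.inr (by simp)) ha
        · exact ⟨Sum.inr 2, Or.inr (by simp), (be_inr_inr 3 2).2 (by simp)⟩
    · -- security
      intro u hu
      rcases u with w | i
      · have hw : w ∉ D := fun h => hu (Or.inl ⟨w, h, rfl⟩)
        obtain ⟨v, hv, hadj⟩ := hD w hw
        refine ⟨Sum.inl v, Or.inl ⟨v, hv, rfl⟩, (be_inl_inl w v).2 hadj, ?_⟩
        intro a ha
        rcases a with w' | i
        · have hw' : w' ∈ X ∪ Y ∪ Z := by rw [hpart]; trivial
          have h1mem : Sum.inr 1 ∈ ((Sum.inl '' D ∪ {Sum.inr 1, Sum.inr 2}) \ {Sum.inl v}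
              ∪ {Sum.inl w} : Set (V ⊕ Fin 4)) := Or.inl ⟨Or.inr (by simp), by simp⟩
          have h2mem : Sum.inr 2 ∈ ((Sum.inl '' D ∪ {Sum.inr 1, Sum.inr 2}) \ {Sum.inl v}
              ∪ {Sum.inl w} : Set (V ⊕ Fin 4)) := Or.inl ⟨Or.inr (by simp), by simp⟩
          rcases hw' with hxy | hz
          · rcases hxy with hx' | hy'
            · exact ⟨Sum.inr 1, h1mem, (be_inl_inr w' 1).2 (Or.inl ⟨rfl, Or.inl hx'⟩)⟩
            · exact ⟨Sum.inr 2, h2mem, (be_inl_inr w' 2).2 (Or.inr ⟨rfl, hy'⟩)⟩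
          · exact ⟨Sum.inr 1, h1mem, (be_inl_inr w' 1).2 (Or.inl ⟨rfl, Or.inr hz⟩)⟩
        · fin_cases i
          · exact ⟨Sum.inr 1, Or.inl ⟨Or.inr (by simp), by simp⟩,
              (be_inr_inr 0 1).2 (by simp)⟩
          · exact absurd (Or.inl ⟨Or.inr (by simp), by simp⟩) ha
          · exact absurd (Or.inl ⟨Or.inr (by simp), by simp⟩) ha
          · exact ⟨Sum.inr 2, Or.inl ⟨Or.inr (by simp), by simp⟩,
              (be_inr_inr 3 2).2 (by simp)⟩
      · fin_cases i
        · -- u = x = inr 0 : swap with y = inr 1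
          refine ⟨Sum.inr 1, Or.inr (by simp), (be_inr_inr 0 1).2 (by simp), ?_⟩
          intro a ha
          rcases a with w' | j
          · have hw' : w' ∉ D := fun h => ha (Or.inl ⟨Or.inl ⟨w', h, rfl⟩, by simp⟩)
            obtain ⟨v, hv, hadj⟩ := hD w' hw'
            exact ⟨Sum.inl v, Or.inl ⟨Or.inl ⟨v, hv, rfl⟩, by simp⟩,
              (be_inl_inl w' v).2 hadj⟩
          · fin_cases j
            · exact absurd (Or.inr (by simp)) ha
            · exact ⟨Sum.inr 0, Or.inr (by simp), (be_inr_inr 1 0).2 (by simp)⟩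
            · exact absurd (Or.inl ⟨Or.inr (by simp), by simp⟩) ha
            · exact ⟨Sum.inr 2, Or.inl ⟨Or.inr (by simp), by simp⟩,
                (be_inr_inr 3 2).2 (by simp)⟩
        · exact absurd (Or.inr (by simp)) hu
        · exact absurd (Or.inr (by simp)) hu
        · -- u = x' = inr 3 : swap with z = inr 2
          refine ⟨Sum.inr 2, Or.inr (by simp), (be_inr_inr 3 2).2 (by simp), ?_⟩
          intro a ha
          rcases a with w' | j
          · have hw' : w' ∉ D := fun h => ha (Or.inl ⟨Or.inl ⟨w', h, rfl⟩, by simp⟩)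
            obtain ⟨v, hv, hadj⟩ := hD w' hw'
            exact ⟨Sum.inl v, Or.inl ⟨Or.inl ⟨v, hv, rfl⟩, by simp⟩,
              (be_inl_inl w' v).2 hadj⟩
          · fin_cases j
            · exact ⟨Sum.inr 1, Or.inl ⟨Or.inr (by simp), by simp⟩,
                (be_inr_inr 0 1).2 (by simp)⟩
            · exact absurd (Or.inl ⟨Or.inr (by simp), by simp⟩) ha
            · exact ⟨Sum.inr 3, Or.inr (by simp), (be_inr_inr 2 3).2 (by simp)⟩
            · exact absurd (Or.inr (by simp)) ha
    · -- cardinality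
      calc (Sum.inl '' D ∪ {Sum.inr 1, Sum.inr 2} : Set (V ⊕ Fin 4)).ncard
          ≤ (Sum.inl '' D : Set (V ⊕ Fin 4)).ncard
            + ({Sum.inr 1, Sum.inr 2} : Set (V ⊕ Fin 4)).ncard := Set.ncard_union_le _ _
        _ ≤ D.ncard + 2 := by
            rw [Set.ncard_image_of_injective _ Sum.inl_injective,
              Set.ncard_pair (by simp : (Sum.inr 1 : V ⊕ Fin 4) ≠ Sum.inr 2)]
        _ ≤ k + 2 := by omega
  · -- backward direction
    rintro ⟨S, ⟨hdom, hsec⟩, hSc⟩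
    set T : Set V := {v | Sum.inl v ∈ S} with hTdef
    set A : Set (Fin 4) := {i | Sum.inr i ∈ S} with hAdef
    have hSeq : S = Sum.inl '' T ∪ Sum.inr '' A := by
      ext a
      rcases a with w | i <;> simp [hTdef, hAdef]
    have hcard : T.ncard + A.ncard = S.ncard := by
      rw [hSeq, Set.ncard_union_eq ?_ (Set.toFinite _) (Set.toFinite _),
        Set.ncard_image_of_injective _ Sum.inl_injective,
        Set.ncard_image_of_injective _ Sum.inr_injective]
      rw [Set.disjoint_left]
      rintro a ⟨w, _, rfl⟩ ⟨i, _, h⟩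
      cases h
    -- x or y in S
    have h01 : (0 : Fin 4) ∈ A ∨ (1 : Fin 4) ∈ A := by
      by_cases h : Sum.inr (0 : Fin 4) ∈ S
      · exact Or.inl h
      · obtain ⟨v, hv, hadj⟩ := hdom _ h
        rcases v with u | i
        · rw [be_inr_inl] at hadj
          rcases hadj with ⟨h0, _⟩ | ⟨h0, _⟩ <;> exact absurd h0 (by decide)
        · rw [be_inr_inr] at hadj
          rcases hadj with ⟨_, h1⟩ | ⟨h0, _⟩ | ⟨h0, _⟩ | ⟨h0, _⟩ | ⟨h0, _⟩ | ⟨h0, _⟩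
          · exact Or.inr (h1 ▸ hv)
          all_goals exact absurd h0 (by decide)
    -- z or x' in S
    have h23 : (2 : Fin 4) ∈ A ∨ (3 : Fin 4) ∈ A := by
      by_cases h : Sum.inr (3 : Fin 4) ∈ S
      · exact Or.inr h
      · obtain ⟨v, hv, hadj⟩ := hdom _ h
        rcases v with u | i
        · rw [be_inr_inl] at hadj
          rcases hadj with ⟨h0, _⟩ | ⟨h0, _⟩ <;> exact absurd h0 (by decide)
        · rw [be_inr_inr] at hadj
          rcases hadj with ⟨h0, _⟩ | ⟨h0, _⟩ | ⟨h0, _⟩ | ⟨h0, _⟩ | ⟨h0, _⟩ | ⟨_, h1⟩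
          · exact absurd h0 (by decide)
          · exact absurd h0 (by decide)
          · exact absurd h0 (by decide)
          · exact absurd h0 (by decide)
          · exact absurd h0 (by decide)
          · exact Or.inl (h1 ▸ hv)
    -- predicates for "problem" vertices
    have hsecP1 : ∀ w ∈ X ∪ Z, Sum.inl w ∉ S → (∀ v, Sum.inl v ∈ S → ¬ G.Adj w v) →
        Sum.inr (1 : Fin 4) ∈ S ∧
          Dominates (bisplitExt G X Y Z) ((S \ {Sum.inr 1}) ∪ {Sum.inl w}) := by
      intro w hwXZ hwS hnT
      obtain ⟨v, hvS, hadj, hd⟩ := hsec _ hwS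
      rcases v with u | i
      · exact absurd ((be_inl_inl w u).1 hadj) (hnT u hvS)
      · rw [be_inl_inr] at hadj
        rcases hadj with ⟨h1, _⟩ | ⟨h2, hm⟩
        · subst h1; exact ⟨hvS, hd⟩
        · rcases hwXZ with h | h
          · exact absurd hm (Set.disjoint_left.1 hXY h)
          · exact absurd h (Set.disjoint_left.1 hYZ hm)
    have hsecP2 : ∀ w ∈ Y, Sum.inl w ∉ S → (∀ v, Sum.inl v ∈ S → ¬ G.Adj w v) →
        Sum.inr (2 : Fin 4) ∈ S ∧
          Dominates (bisplitExt G X Y Z) ((S \ {Sum.inr 2}) ∪ {Sum.inl w}) := by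
      intro w hwY hwS hnT
      obtain ⟨v, hvS, hadj, hd⟩ := hsec _ hwS
      rcases v with u | i
      · exact absurd ((be_inl_inl w u).1 hadj) (hnT u hvS)
      · rw [be_inl_inr] at hadj
        rcases hadj with ⟨h1, hm⟩ | ⟨h2, _⟩
        · rcases hm with h | h
          · exact absurd hwY (Set.disjoint_left.1 hXY h)
          · exact absurd hwY (Set.disjoint_right.1 hYZ h)
        · subst h2; exact ⟨hvS, hd⟩
    have hK1 : ∀ w ∈ X ∪ Z, Sum.inl w ∉ S → (∀ v, Sum.inl v ∈ S → ¬ G.Adj w v) →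
        Sum.inr (0 : Fin 4) ∈ S := by
      intro w hwXZ hwS hnT
      by_contra h0
      obtain ⟨v, hvS, hadj, hd⟩ := hsec _ h0
      have hv1 : v = Sum.inr 1 := by
        rcases v with u | i
        · rw [be_inr_inl] at hadj
          rcases hadj with ⟨h, _⟩ | ⟨h, _⟩ <;> exact absurd h (by decide)
        · rw [be_inr_inr] at hadj
          rcases hadj with ⟨_, h⟩ | ⟨h, _⟩ | ⟨h, _⟩ | ⟨h, _⟩ | ⟨h, _⟩ | ⟨h, _⟩
          · rw [h]
          all_goals exact absurd h (by decide)
      subst hv1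
      have hwmem : Sum.inl w ∉ (S \ {Sum.inr 1}) ∪ {Sum.inr (0 : Fin 4)} := by
        rintro (⟨h, _⟩ | h)
        · exact hwS h
        · simp at h
      obtain ⟨v', hv', hadj'⟩ := hd _ hwmem
      rcases v' with u | i
      · have huS : Sum.inl u ∈ S := by
          rcases hv' with ⟨h, _⟩ | h
          · exact h
          · simp at h
        exact hnT u huS ((be_inl_inl w u).1 hadj')
      · rw [be_inl_inr] at hadj'
        rcases hv' with ⟨hiS, hine⟩ | heq
        · rcases hadj' with ⟨h1, _⟩ | ⟨h2, hm⟩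
          · exact hine (by simp [h1])
          · rcases hwXZ with h | h
            · exact absurd hm (Set.disjoint_left.1 hXY h)
            · exact absurd h (Set.disjoint_left.1 hYZ hm)
        · have hi0 : i = 0 := by simpa using heq
          subst hi0
          rcases hadj' with ⟨h, _⟩ | ⟨h, _⟩ <;> exact absurd h (by decide)
    have hK2 : ∀ w ∈ Y, Sum.inl w ∉ S → (∀ v, Sum.inl v ∈ S → ¬ G.Adj w v) →
        Sum.inr (3 : Fin 4) ∈ S := by
      intro w hwY hwS hnT
      by_contra h3
      obtain ⟨v, hvS, hadj, hd⟩ := hsec _ h3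
      have hv2 : v = Sum.inr 2 := by
        rcases v with u | i
        · rw [be_inr_inl] at hadj
          rcases hadj with ⟨h, _⟩ | ⟨h, _⟩ <;> exact absurd h (by decide)
        · rw [be_inr_inr] at hadj
          rcases hadj with ⟨h, _⟩ | ⟨h, _⟩ | ⟨h, _⟩ | ⟨h, _⟩ | ⟨h, _⟩ | ⟨_, h⟩
          · exact absurd h (by decide)
          · exact absurd h (by decide)
          · exact absurd h (by decide)
          · exact absurd h (by decide)
          · exact absurd h (by decide)
          · rw [h]
      subst hv2
      have hwmem : Sum.inl w ∉ (S \ {Sum.inr 2}) ∪ {Sum.inr (3 : Fin 4)} := by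
        rintro (⟨h, _⟩ | h)
        · exact hwS h
        · simp at h
      obtain ⟨v', hv', hadj'⟩ := hd _ hwmem
      rcases v' with u | i
      · have huS : Sum.inl u ∈ S := by
          rcases hv' with ⟨h, _⟩ | h
          · exact h
          · simp at h
        exact hnT u huS ((be_inl_inl w u).1 hadj')
      · rw [be_inl_inr] at hadj'
        rcases hv' with ⟨hiS, hine⟩ | heq
        · rcases hadj' with ⟨h1, hm⟩ | ⟨h2, _⟩
          · rcases hm with h | h
            · exact absurd hwY (Set.disjoint_left.1 hXY h)
            · exact absurd hwY (Set.disjoint_right.1 hYZ h)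
          · exact hine (by simp [h2])
        · have hi3 : i = 3 := by simpa using heq
          subst hi3
          rcases hadj' with ⟨h, _⟩ | ⟨h, _⟩ <;> exact absurd h (by decide)
    have hK3 : ∀ w ∈ X ∪ Z, Sum.inl w ∉ S → (∀ v, Sum.inl v ∈ S → ¬ G.Adj w v) →
        ∀ w' ∈ X ∪ Z, Sum.inl w' ∉ S → (∀ v, Sum.inl v ∈ S → ¬ G.Adj w' v) →
          w' ≠ w → G.Adj w' w := by
      intro w hwXZ hwS hnT w' hw'XZ hw'S hnT' hne
      obtain ⟨_, hd⟩ := hsecP1 w hwXZ hwS hnT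
      have hwmem : Sum.inl w' ∉ (S \ {Sum.inr 1}) ∪ {Sum.inl w} := by
        rintro (⟨h, _⟩ | h)
        · exact hw'S h
        · exact hne (by simpa using h)
      obtain ⟨v', hv', hadj'⟩ := hd _ hwmem
      rcases v' with u | i
      · rcases hv' with ⟨h, _⟩ | h
        · exact absurd ((be_inl_inl w' u).1 hadj') (hnT' u h)
        · have hu : u = w := by simpa using h
          subst hu
          exact (be_inl_inl w' u).1 hadj'
      · rw [be_inl_inr] at hadj'
        rcases hv' with ⟨hiS, hine⟩ | heq
        · rcases hadj' with ⟨h1, _⟩ | ⟨h2, hm⟩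
          · exact absurd (by simp [h1]) hine
          · rcases hw'XZ with h | h
            · exact absurd hm (Set.disjoint_left.1 hXY h)
            · exact absurd h (Set.disjoint_left.1 hYZ hm)
        · simp at heq
    have hK4 : ∀ w ∈ Y, Sum.inl w ∉ S → (∀ v, Sum.inl v ∈ S → ¬ G.Adj w v) →
        ∀ w' ∈ Y, Sum.inl w' ∉ S → (∀ v, Sum.inl v ∈ S → ¬ G.Adj w' v) → w' = w := by
      intro w hwY hwS hnT w' hw'Y hw'S hnT'
      by_contra hne
      obtain ⟨_, hd⟩ := hsecP2 w hwY hwS hnT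
      have hwmem : Sum.inl w' ∉ (S \ {Sum.inr 2}) ∪ {Sum.inl w} := by
        rintro (⟨h, _⟩ | h)
        · exact hw'S h
        · exact hne (by simpa using h)
      obtain ⟨v', hv', hadj'⟩ := hd _ hwmem
      rcases v' with u | i
      · rcases hv' with ⟨h, _⟩ | h
        · exact absurd ((be_inl_inl w' u).1 hadj') (hnT' u h)
        · have hu : u = w := by simpa using h
          subst hu
          exact hY w' hw'Y u hwY ((be_inl_inl w' u).1 hadj')
      · rw [be_inl_inr] at hadj'
        rcases hv' with ⟨hiS, hine⟩ | heq
        · rcases hadj' with ⟨h1, hm⟩ | ⟨h2, _⟩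
          · rcases hm with h | h
            · exact absurd hw'Y (Set.disjoint_left.1 hXY h)
            · exact absurd hw'Y (Set.disjoint_right.1 hYZ h)
          · exact absurd (by simp [h2]) hine
        · simp at heq
    -- main case analysis
    by_cases hP1 : ∃ w, w ∈ X ∪ Z ∧ Sum.inl w ∉ S ∧ ∀ v, Sum.inl v ∈ S → ¬ G.Adj w v
    · by_cases hP2 : ∃ w, w ∈ Y ∧ Sum.inl w ∉ S ∧ ∀ v, Sum.inl v ∈ S → ¬ G.Adj w v
      · -- both kinds of problem vertices exist
        obtain ⟨w1, hw1XZ, hw1S, hn1⟩ := hP1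
        obtain ⟨w2, hw2Y, hw2S, hn2⟩ := hP2
        have hA4 : 4 ≤ A.ncard := by
          have h0 : (0 : Fin 4) ∈ A := hK1 w1 hw1XZ hw1S hn1
          have h1 : (1 : Fin 4) ∈ A := (hsecP1 w1 hw1XZ hw1S hn1).1
          have h2 : (2 : Fin 4) ∈ A := (hsecP2 w2 hw2Y hw2S hn2).1
          have h3 : (3 : Fin 4) ∈ A := hK2 w2 hw2Y hw2S hn2
          have hAu : A = Set.univ := Set.eq_univ_of_forall fun i => by
            fin_cases i <;> assumption
          rw [hAu, Set.ncard_univ]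
          simp
        refine ⟨T ∪ {w1, w2}, ?_, ?_⟩
        · intro w hw
          have hwT : Sum.inl w ∉ S := fun h => hw (Or.inl h)
          by_cases hN : ∃ v, Sum.inl v ∈ S ∧ G.Adj w v
          · obtain ⟨v, hv, ha⟩ := hN
            exact ⟨v, Or.inl hv, ha⟩
          · push_neg at hN
            have hwne1 : w ≠ w1 := fun h => hw (Or.inr (Or.inl h))
            have hwne2 : w ≠ w2 := fun h => hw (Or.inr (Or.inr h))
            have hwXYZ : w ∈ X ∪ Y ∪ Z := by rw [hpart]; trivial
            rcases hwXYZ with (hx | hy) | hz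
            · exact ⟨w1, Or.inr (Or.inl rfl),
                hK3 w1 hw1XZ hw1S hn1 w (Or.inl hx) hwT hN hwne1⟩
            · exact absurd (hK4 w2 hw2Y hw2S hn2 w hy hwT hN) hwne2
            · exact ⟨w1, Or.inr (Or.inl rfl),
                hK3 w1 hw1XZ hw1S hn1 w (Or.inr hz) hwT hN hwne1⟩
        · have hDle : (T ∪ {w1, w2}).ncard ≤ T.ncard + 2 := by
            calc (T ∪ {w1, w2}).ncard ≤ T.ncard + ({w1, w2} : Set V).ncard :=
                Set.ncard_union_le _ _
              _ ≤ T.ncard + 2 := by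
                have h1 := Set.ncard_insert_le w1 ({w2} : Set V)
                have h2 : ({w2} : Set V).ncard = 1 := Set.ncard_singleton w2
                omega
          omega
      · -- only X ∪ Z problem vertices
        obtain ⟨w1, hw1XZ, hw1S, hn1⟩ := hP1
        have h0 : (0 : Fin 4) ∈ A := hK1 w1 hw1XZ hw1S hn1
        have h1 : (1 : Fin 4) ∈ A := (hsecP1 w1 hw1XZ hw1S hn1).1
        have hA3 : 3 ≤ A.ncard := by
          rcases h23 with h | h
          · exact triple_le_ncard 0 1 2 h0 h1 h (by decide) (by decide) (by decide)
          · exact triple_le_ncard 0 1 3 h0 h1 h (by decide) (by decide) (by decide)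
        refine ⟨T ∪ {w1}, ?_, ?_⟩
        · intro w hw
          have hwT : Sum.inl w ∉ S := fun h => hw (Or.inl h)
          by_cases hN : ∃ v, Sum.inl v ∈ S ∧ G.Adj w v
          · obtain ⟨v, hv, ha⟩ := hN
            exact ⟨v, Or.inl hv, ha⟩
          · push_neg at hN
            have hwne1 : w ≠ w1 := fun h => hw (Or.inr h)
            have hwXYZ : w ∈ X ∪ Y ∪ Z := by rw [hpart]; trivial
            rcases hwXYZ with (hx | hy) | hz
            · exact ⟨w1, Or.inr rfl,
                hK3 w1 hw1XZ hw1S hn1 w (Or.inl hx) hwT hN hwne1⟩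
            · exact absurd ⟨w, hy, hwT, hN⟩ hP2
            · exact ⟨w1, Or.inr rfl,
                hK3 w1 hw1XZ hw1S hn1 w (Or.inr hz) hwT hN hwne1⟩
        · have hDle : (T ∪ {w1}).ncard ≤ T.ncard + 1 := by
            calc (T ∪ {w1}).ncard ≤ T.ncard + ({w1} : Set V).ncard :=
                Set.ncard_union_le _ _
              _ ≤ T.ncard + 1 := by rw [Set.ncard_singleton]
          omega
    · by_cases hP2 : ∃ w, w ∈ Y ∧ Sum.inl w ∉ S ∧ ∀ v, Sum.inl v ∈ S → ¬ G.Adj w v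
      · -- only Y problem vertices
        obtain ⟨w2, hw2Y, hw2S, hn2⟩ := hP2
        have h2 : (2 : Fin 4) ∈ A := (hsecP2 w2 hw2Y hw2S hn2).1
        have h3 : (3 : Fin 4) ∈ A := hK2 w2 hw2Y hw2S hn2
        have hA3 : 3 ≤ A.ncard := by
          rcases h01 with h | h
          · exact triple_le_ncard 0 2 3 h h2 h3 (by decide) (by decide) (by decide)
          · exact triple_le_ncard 1 2 3 h h2 h3 (by decide) (by decide) (by decide)
        refine ⟨T ∪ {w2}, ?_, ?_⟩
        · intro w hw
          have hwT : Sum.inl w ∉ S := fun h => hw (Or.inl h)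
          by_cases hN : ∃ v, Sum.inl v ∈ S ∧ G.Adj w v
          · obtain ⟨v, hv, ha⟩ := hN
            exact ⟨v, Or.inl hv, ha⟩
          · push_neg at hN
            have hwne2 : w ≠ w2 := fun h => hw (Or.inr h)
            have hwXYZ : w ∈ X ∪ Y ∪ Z := by rw [hpart]; trivial
            rcases hwXYZ with (hx | hy) | hz
            · exact absurd ⟨w, Or.inl hx, hwT, hN⟩ hP1
            · exact absurd (hK4 w2 hw2Y hw2S hn2 w hy hwT hN) hwne2
            · exact absurd ⟨w, Or.inr hz, hwT, hN⟩ hP1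
        · have hDle : (T ∪ {w2}).ncard ≤ T.ncard + 1 := by
            calc (T ∪ {w2}).ncard ≤ T.ncard + ({w2} : Set V).ncard :=
                Set.ncard_union_le _ _
              _ ≤ T.ncard + 1 := by rw [Set.ncard_singleton]
          omega
      · -- no problem vertices: T itself dominates
        have hA2 : 2 ≤ A.ncard := by
          rcases h01 with h | h <;> rcases h23 with h' | h'
          · exact pair_le_ncard 0 2 h h' (by decide)
          · exact pair_le_ncard 0 3 h h' (by decide)
          · exact pair_le_ncard 1 2 h h' (by decide)
          · exact pair_le_ncard 1 3 h h' (by decide)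
        refine ⟨T, ?_, ?_⟩
        · intro w hw
          by_cases hN : ∃ v, Sum.inl v ∈ S ∧ G.Adj w v
          · obtain ⟨v, hv, ha⟩ := hN
            exact ⟨v, hv, ha⟩
          · push_neg at hN
            have hwXYZ : w ∈ X ∪ Y ∪ Z := by rw [hpart]; trivial
            rcases hwXYZ with (hx | hy) | hz
            · exact absurd ⟨w, Or.inl hx, hw, hN⟩ hP1
            · exact absurd ⟨w, hy, hw, hN⟩ hP2
            · exact absurd ⟨w, Or.inr hz, hw, hN⟩ hP1
        · omega
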